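/- For all integers k ≥ 0 and 0 ≤ m ≤ k and all complex parameters z₁, z₂ ∈ ℂ, the directional derivative of F_k^m along the vector field e₁ satisfies (∇_{e₁} F_k^m)(p) = i(2m-k)·F_k^m(p) for every p ∈ ℝ⁴. -/

import Mathlib

/-- The polynomial `F_k^m(x,y,z,w) = (αz₁+βz₂)^m (-conj(β)z₁+conj(α)z₂)^{k-m}` where
`α = x+iy`, `β = z+iw`, with the convention that `F_k^m = 0` unless `0 ≤ m ≤ k`. -/
noncomputable def Fkm (k : ℕ) (m : ℤ) (z₁ z₂ : ℂ) (p : Fin 4 → ℝ) : ℂ :=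
  if 0 ≤ m ∧ m ≤ (k : ℤ) then
    (((p 0 : ℂ) + (p 1 : ℂ) * Complex.I) * z₁ +
        ((p 2 : ℂ) + (p 3 : ℂ) * Complex.I) * z₂) ^ m.toNat *
      ((-(starRingEnd ℂ) ((p 2 : ℂ) + (p 3 : ℂ) * Complex.I)) * z₁ +
        (starRingEnd ℂ) ((p 0 : ℂ) + (p 1 : ℂ) * Complex.I) * z₂) ^ (k - m.toNat)
  else 0

/-- The Hopf vector field `e₁(x,y,z,w) = (-y, x, -w, z)` on `ℝ⁴`. -/
def hopfE1 (p : Fin 4 → ℝ) : Fin 4 → ℝ := ![-p 1, p 0, -p 3, p 2]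

/-- the directional derivative of `F_k^m` along `e₁` satisfies
`∇_{e₁} F_k^m = i(2m-k)·F_k^m` everywhere on `ℝ⁴`. -/
lemma key_alg (a b aI bI : ℂ) (n j : ℕ) (ha : aI = Complex.I * a)
    (hb : bI = -Complex.I * b) :
    a ^ n * ((j : ℂ) * b ^ (j - 1) * bI) + b ^ j * ((n : ℂ) * a ^ (n - 1) * aI)
      = Complex.I * ((n : ℂ) - (j : ℂ)) * (a ^ n * b ^ j) := by
  subst ha hb
  rcases n with _ | n <;> rcases j with _ | j <;> simp <;> push_cast <;> ring


lemma myPow {E : Type*} [NormedAddCommGroup E] [NormedSpace ℝ E] {f : E → ℂ}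
    {f' : E →L[ℝ] ℂ} {x : E} (h : HasFDerivAt f f' x) :
    ∀ n : ℕ, HasFDerivAt (fun y => f y ^ n) (((n : ℂ) * f x ^ (n - 1)) • f') x
  | 0 => by
    have h0 := hasFDerivAt_const (𝕜 := ℝ) (1 : ℂ) x
    convert h0 using 1
    · simp
    · ext v; simp
  | (n + 1) => by
    have H := (myPow h n).mul h
    have hfun : (fun y => f y ^ (n + 1)) = fun y => f y ^ n * f y := by
      funext y; rw [pow_succ]
    rw [hfun]
    refine H.congr_fderiv ?_
    ext v
    simp only [ContinuousLinearMap.add_apply, ContinuousLinearMap.smul_apply, smul_eq_mul]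
    rcases n with _ | n
    · simp
    · push_cast [Nat.succ_sub_one]
      ring

theorem stmt_9 (k : ℕ) (m : ℤ) (hm0 : 0 ≤ m) (hmk : m ≤ (k : ℤ)) (z₁ z₂ : ℂ)
    (p : Fin 4 → ℝ) :
    fderiv ℝ (Fkm k m z₁ z₂) p (hopfE1 p)
      = Complex.I * (2 * (m : ℂ) - (k : ℂ)) * Fkm k m z₁ z₂ p := by
  set n := m.toNat with hn
  set A : (Fin 4 → ℝ) → ℂ := fun q =>
    ((q 0 : ℂ) + (q 1 : ℂ) * Complex.I) * z₁ + ((q 2 : ℂ) + (q 3 : ℂ) * Complex.I) * z₂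
  set B : (Fin 4 → ℝ) → ℂ := fun q =>
    (-(q 2 : ℂ) + (q 3 : ℂ) * Complex.I) * z₁ + ((q 0 : ℂ) - (q 1 : ℂ) * Complex.I) * z₂
  have hcond : Fkm k m z₁ z₂ = fun q => A q ^ n * B q ^ (k - n) := by
    funext q
    simp only [Fkm, hm0, hmk, and_self, if_true, A, B, map_add, map_mul, map_neg,
      Complex.conj_ofReal, Complex.conj_I]
    ring_nf
    rw [← hn]
  have hc : ∀ i : Fin 4, HasFDerivAt (fun q : Fin 4 → ℝ => (q i : ℂ))
      (Complex.ofRealCLM.comp (ContinuousLinearMap.proj i)) p :=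
    fun i => Complex.ofRealCLM.hasFDerivAt.comp p (hasFDerivAt_apply i p)
  have hA : HasFDerivAt A _ p :=
    (((hc 0).add ((hc 1).mul_const Complex.I)).mul_const z₁).add
      ((((hc 2)).add ((hc 3).mul_const Complex.I)).mul_const z₂)
  have hB : HasFDerivAt B _ p :=
    ((((hc 2).neg).add ((hc 3).mul_const Complex.I)).mul_const z₁).add
      ((((hc 0)).sub ((hc 1).mul_const Complex.I)).mul_const z₂)
  have hF := (myPow hA n).mul (myPow hB (k - n))
  rw [hcond, show fderiv ℝ (fun q => A q ^ n * B q ^ (k - n)) p = _ from hF.fderiv]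
  have hnk : n ≤ k := by omega
  have hmn : (m : ℂ) = (n : ℂ) := by
    rw [hn]; norm_cast; omega
  have hknC : ((k - n : ℕ) : ℂ) = (k : ℂ) - (n : ℂ) := by push_cast [hnk]; ring
  simp only [ContinuousLinearMap.add_apply, ContinuousLinearMap.smul_apply,
    ContinuousLinearMap.coe_smul', ContinuousLinearMap.smulRight_apply,
    ContinuousLinearMap.sub_apply, ContinuousLinearMap.neg_apply,
    ContinuousLinearMap.comp_apply, ContinuousLinearMap.proj_apply,
    Complex.ofRealCLM_apply, smul_eq_mul, Pi.smul_apply, hopfE1,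
    Matrix.cons_val_zero, Matrix.cons_val_one, Matrix.head_cons,
    Matrix.cons_val_two, Matrix.tail_cons, Matrix.cons_val_three,
    Complex.ofReal_neg]
  have hBI : z₁ * (- -((p 3 : ℝ) : ℂ) + Complex.I * ((p 2 : ℝ) : ℂ)) +
      z₂ * (-((p 1 : ℝ) : ℂ) - Complex.I * ((p 0 : ℝ) : ℂ)) = -Complex.I * B p := by
    simp only [B]; ring_nf; rw [Complex.I_sq]; ring
  have hAI : z₁ * (-((p 1 : ℝ) : ℂ) + Complex.I * ((p 0 : ℝ) : ℂ)) +
      z₂ * (-((p 3 : ℝ) : ℂ) + Complex.I * ((p 2 : ℝ) : ℂ)) = Complex.I * A p := by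
    simp only [A]; ring_nf; rw [Complex.I_sq]; ring
  rw [hBI, hAI, key_alg (A p) (B p) _ _ n (k - n) rfl rfl, hknC, hmn]
  ring
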